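/- There do not exist monic, pairwise coprime, squarefree polynomials V, M, P over C with deg V = 22, deg M = 33, deg P = 12 and V^3 = M^2 + k P^5 for some nonzero constant k. -/

import Mathlib

open Polynomial

private lemma aux_nd {p q : ℂ[X]} {a b : ℕ} (hp : p.natDegree ≤ a) (hq : q.natDegree ≤ b) :
    (p * q).natDegree ≤ a + b :=
  natDegree_mul_le.trans (add_le_add hp hq)

private lemma aux_coeff_mul (p q : ℂ[X]) {a b n : ℕ} (hp : p.natDegree ≤ a)
    (hq : q.natDegree ≤ b) (hn : n = a + b) :
    (p * q).coeff n = p.coeff a * q.coeff b := by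
  subst hn; exact coeff_mul_add_eq_of_natDegree_le hp hq

theorem no_fullerene_C22 :
    ¬ ∃ (V M P : ℂ[X]) (k : ℂ), k ≠ 0 ∧
      V.Monic ∧ M.Monic ∧ P.Monic ∧
      IsCoprime V M ∧ IsCoprime V P ∧ IsCoprime M P ∧
      Squarefree V ∧ Squarefree M ∧ Squarefree P ∧
      V.natDegree = 22 ∧ M.natDegree = 33 ∧ P.natDegree = 12 ∧
      V^3 = M^2 + C k * P^5 := by
  rintro ⟨V, M, P, k, hk, hVmo, hMmo, hPmo, hVM, hVP, hMP, hVsf, hMsf, hPsf, hdV, hdM, hdP, heq⟩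
  set V1 := derivative V with hV1
  set VV2 := derivative V1 with hVV2
  set M1 := derivative M with hM1
  set P1 := derivative P with hP1
  set P2 := derivative P1 with hP2
  set P3 := derivative P2 with hP3
  have hPne : P ≠ 0 := hPmo.ne_zero
  have hVne : V ≠ 0 := hVmo.ne_zero
  -- coefficients
  have cV : V.coeff 22 = 1 := by have := hVmo.coeff_natDegree; rwa [hdV] at this
  have cM : M.coeff 33 = 1 := by have := hMmo.coeff_natDegree; rwa [hdM] at this
  have cP : P.coeff 12 = 1 := by have := hPmo.coeff_natDegree; rwa [hdP] at this
  have cP1 : P1.coeff 11 = 12 := by rw [hP1, coeff_derivative, cP]; norm_num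
  have cP2 : P2.coeff 10 = 132 := by rw [hP2, coeff_derivative, cP1]; norm_num
  have cM1 : M1.coeff 32 = 33 := by rw [hM1, coeff_derivative, cM]; norm_num
  -- degree bounds
  have dV : V.natDegree ≤ 22 := hdV.le
  have dM : M.natDegree ≤ 33 := hdM.le
  have dP : P.natDegree ≤ 12 := hdP.le
  have dP1 : P1.natDegree ≤ 11 := by
    have := natDegree_derivative_le P
    rw [← hP1, hdP] at this; omega
  have dP2 : P2.natDegree ≤ 10 := (natDegree_derivative_le P1).trans (by omega)
  have dM1 : M1.natDegree ≤ 32 := by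
    have := natDegree_derivative_le M
    rw [← hM1, hdM] at this; omega
  -- derivative of the main equation
  have h0d : 3 * V ^ 2 * V1 = 2 * M * M1 + C k * (5 * P ^ 4 * P1) := by
    have h := congrArg derivative heq
    simp only [derivative_pow, derivative_add, derivative_mul, derivative_C, zero_mul, add_zero,
      zero_add, map_natCast, map_ofNat, Nat.cast_ofNat, Nat.reduceSub, pow_one,
      ← hV1, ← hM1, ← hP1] at h
    linear_combination h
  -- eliminate k
  have hI : V ^ 2 * (5 * P1 * V - 3 * P * V1) = M * (5 * P1 * M - 2 * P * M1) := by
    linear_combination (5 * P1) * heq - P * h0d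
  have hSdvd : V ^ 2 ∣ (5 * P1 * M - 2 * P * M1) :=
    (hVM.pow_left).dvd_of_dvd_mul_left ⟨_, hI.symm⟩
  obtain ⟨q, hq⟩ := hSdvd
  -- the quotient is the constant -6
  have cS : (5 * P1 * M - 2 * P * M1).coeff 44 = -6 := by
    rw [show (5 : ℂ[X]) * P1 * M - 2 * P * M1 = 5 * (P1 * M) - 2 * (P * M1) by ring,
      coeff_sub, coeff_ofNat_mul, coeff_ofNat_mul,
      aux_coeff_mul P1 M dP1 dM (by norm_num),
      aux_coeff_mul P M1 dP dM1 (by norm_num), cP1, cM, cP, cM1]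
    norm_num
  have hSne : (5 * P1 * M - 2 * P * M1) ≠ 0 := by
    intro h; rw [h, coeff_zero] at cS; norm_num at cS
  have dS : (5 * P1 * M - 2 * P * M1).natDegree ≤ 44 := by
    rw [show (5 : ℂ[X]) * P1 * M - 2 * P * M1 = 5 * (P1 * M) - 2 * (P * M1) by ring]
    refine (natDegree_sub_le _ _).trans (max_le ?_ ?_)
    · have h1 : ((5 : ℂ[X]) * (P1 * M)).natDegree ≤ (P1 * M).natDegree := by
        simpa [C_ofNat] using natDegree_C_mul_le (5 : ℂ) (P1 * M)
      exact h1.trans ((aux_nd dP1 dM).trans (by norm_num))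
    · have h1 : ((2 : ℂ[X]) * (P * M1)).natDegree ≤ (P * M1).natDegree := by
        simpa [C_ofNat] using natDegree_C_mul_le (2 : ℂ) (P * M1)
      exact h1.trans ((aux_nd dP dM1).trans (by norm_num))
  have dV2 : (V ^ 2).natDegree = 44 := by rw [natDegree_pow, hdV]
  have hqne : q ≠ 0 := by rintro rfl; rw [mul_zero] at hq; exact hSne hq
  have hdq : q.natDegree = 0 := by
    have h := natDegree_mul (pow_ne_zero 2 hVne) hqne
    rw [← hq, dV2] at h
    omega
  have hc : q = C (q.coeff 0) := eq_C_of_natDegree_eq_zero hdq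
  rw [hc] at hq
  have cV2 : (V ^ 2).coeff 44 = 1 := by
    have := (hVmo.pow (n := 2)).coeff_natDegree; rwa [dV2] at this
  have hcval : q.coeff 0 = -6 := by
    have h44 := congrArg (fun f => f.coeff 44) hq
    simp only [coeff_mul_C] at h44
    rw [cS, cV2, one_mul] at h44
    exact h44.symm
  have h2 : 5 * P1 * M - 2 * P * M1 = -6 * V ^ 2 := by
    rw [hq, hcval]
    have h6 : (C (-6 : ℂ)) = (-6 : ℂ[X]) := by
      rw [map_neg]; exact congrArg Neg.neg (map_ofNat C 6)
    rw [h6]; ring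
  -- the first Wronskian relation
  have h1 : 5 * P1 * V - 3 * P * V1 = -6 * M :=
    mul_left_cancel₀ (pow_ne_zero 2 hVne) (by linear_combination hI + M * h2)
  -- its derivative
  have h1d : 5 * P2 * V + 2 * P1 * V1 - 3 * P * VV2 = -6 * M1 := by
    have h := congrArg derivative h1
    simp only [derivative_sub, derivative_add, derivative_mul, derivative_neg, derivative_ofNat,
      zero_mul, mul_zero, add_zero, zero_add, neg_zero, ← hV1, ← hVV2, ← hM1, ← hP1, ← hP2] at h
    linear_combination h
  -- second order relation
  have hE2 : 25 * P1 ^ 2 * V - 19 * P * P1 * V1 - 10 * P * P2 * V + 6 * P ^ 2 * VV2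
      = 36 * V ^ 2 := by
    linear_combination (5 * P1) * h1 - (2 * P) * h1d - 6 * h2
  -- P divides 25 P1^2 - 36 V
  have hBdvd : P ∣ (25 * P1 ^ 2 - 36 * V) := by
    apply (hVP.symm).dvd_of_dvd_mul_left
    exact ⟨19 * P1 * V1 + 10 * P2 * V - 6 * P * VV2, by linear_combination hE2⟩
  obtain ⟨B, hB⟩ := hBdvd
  set B1 := derivative B with hB1
  set B2 := derivative B1 with hB2
  have hBd : 50 * P1 * P2 - 36 * V1 = P1 * B + P * B1 := by
    have h := congrArg derivative hB
    simp only [derivative_sub, derivative_add, derivative_mul, derivative_pow, derivative_ofNat,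
      derivative_C, map_natCast, map_ofNat, Nat.cast_ofNat, Nat.reduceSub, pow_one,
      zero_mul, mul_zero, add_zero, zero_add, ← hV1, ← hP1, ← hP2, ← hB1] at h
    linear_combination h
  have hBdd : 50 * P2 ^ 2 + 50 * P1 * P3 - 36 * VV2 = P2 * B + 2 * P1 * B1 + P * B2 := by
    have h := congrArg derivative hBd
    simp only [derivative_sub, derivative_add, derivative_mul, derivative_ofNat,
      zero_mul, mul_zero, add_zero, zero_add,
      ← hV1, ← hVV2, ← hP1, ← hP2, ← hP3, ← hB1, ← hB2] at h
    linear_combination h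
  -- the key identity
  have keyP : P * (P1 ^ 2 * (44 * B - 1200 * P2)) =
      P * (P * (B ^ 2 - 7 * P1 * B1 - 4 * P2 * B - 300 * P2 ^ 2 - 300 * P1 * P3 + 6 * P * B2)) := by
    linear_combination 36 * hE2 + (P * B - 10 * (P * P2) - 36 * V) * hB
      + (-19 * (P * P1)) * hBd + (6 * P ^ 2) * hBdd
  have key2 := mul_left_cancel₀ hPne keyP
  have hsep : IsCoprime P P1 := PerfectField.separable_iff_squarefree.mpr hPsf
  have hdvdX : P ∣ (44 * B - 1200 * P2) :=
    (hsep.pow_right).dvd_of_dvd_mul_left ⟨_, key2⟩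
  -- degree and leading coefficient of B
  have cW : (25 * P1 ^ 2 - 36 * V).coeff 22 = 3564 := by
    rw [show (25 : ℂ[X]) * P1 ^ 2 - 36 * V = 25 * (P1 * P1) - 36 * V by ring,
      coeff_sub, coeff_ofNat_mul, coeff_ofNat_mul,
      aux_coeff_mul P1 P1 dP1 dP1 (by norm_num), cP1, cV]
    norm_num
  have dW : (25 * P1 ^ 2 - 36 * V).natDegree ≤ 22 := by
    rw [show (25 : ℂ[X]) * P1 ^ 2 - 36 * V = 25 * (P1 * P1) - 36 * V by ring]
    refine (natDegree_sub_le _ _).trans (max_le ?_ ?_)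
    · have h1 : ((25 : ℂ[X]) * (P1 * P1)).natDegree ≤ (P1 * P1).natDegree := by
        simpa [C_ofNat] using natDegree_C_mul_le (25 : ℂ) (P1 * P1)
      exact h1.trans ((aux_nd dP1 dP1).trans (by norm_num))
    · have h1 : ((36 : ℂ[X]) * V).natDegree ≤ V.natDegree := by
        simpa [C_ofNat] using natDegree_C_mul_le (36 : ℂ) V
      exact h1.trans dV
  have cPB : (P * B).coeff 22 = 3564 := by rw [← hB]; exact cW
  have hBne : B ≠ 0 := by
    rintro rfl; rw [mul_zero, coeff_zero] at cPB; norm_num at cPB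
  have dB : B.natDegree ≤ 10 := by
    have h := natDegree_mul hPne hBne
    have h2 : (P * B).natDegree ≤ 22 := by rw [← hB]; exact dW
    rw [h, hdP] at h2; omega
  have cB : B.coeff 10 = 3564 := by
    have h := aux_coeff_mul P B dP dB (show (22 : ℕ) = 12 + 10 by norm_num)
    rw [cP, one_mul] at h
    exact h.symm.trans cPB
  -- final contradiction
  have cX : (44 * B - 1200 * P2).coeff 10 = -1584 := by
    rw [coeff_sub, coeff_ofNat_mul, coeff_ofNat_mul, cB, cP2]; norm_num
  have hXne : (44 * B - 1200 * P2) ≠ 0 := by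
    intro h; rw [h, coeff_zero] at cX; norm_num at cX
  have dX : (44 * B - 1200 * P2).natDegree ≤ 10 := by
    refine (natDegree_sub_le _ _).trans (max_le ?_ ?_)
    · have h1 : ((44 : ℂ[X]) * B).natDegree ≤ B.natDegree := by
        simpa [C_ofNat] using natDegree_C_mul_le (44 : ℂ) B
      exact h1.trans dB
    · have h1 : ((1200 : ℂ[X]) * P2).natDegree ≤ P2.natDegree := by
        simpa [C_ofNat] using natDegree_C_mul_le (1200 : ℂ) P2
      exact h1.trans dP2
  have hfin := Polynomial.natDegree_le_of_dvd hdvdX hXne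
  rw [hdP] at hfin
  omega
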